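/- Let p be a prime with p ≡ 3 (mod 4), r > 0, and let v₃₅ = a·p^k, v₄₅ = b·p^l with a, b ∈ ℤ_p^× and 0 ≤ k, l < r. Suppose p^r divides v₃₅·v₄₅, 2p^r divides v₃₅² + v₄₅² and v₃₅² − v₄₅², and the coprimality conditions gcd(p^r, v₃₅, v₄₅, (v₃₅²+v₄₅²)/(2p^r)) = 1 and gcd(p^r, v₃₅, v₄₅, v₃₅v₄₅/p^r, (v₃₅²−v₄₅²)/(2p^r)) = 1 hold. Then r = 2·min(k, l). -/

import Mathlib

open PadicInt in
lemma aux_sum_sq_unit (p : ℕ) [Fact p.Prime] (hp4 : p % 4 = 3) (a b : ℤ_[p])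
    (hb : IsUnit b) : IsUnit (a ^ 2 + b ^ 2) := by
  by_contra h
  have hmem : a ^ 2 + b ^ 2 ∈ IsLocalRing.maximalIdeal ℤ_[p] := by
    rw [IsLocalRing.mem_maximalIdeal]; exact h
  rw [← PadicInt.ker_toZMod, RingHom.mem_ker] at hmem
  have hb' : (PadicInt.toZMod b) ≠ 0 := (hb.map (PadicInt.toZMod (p := p))).ne_zero
  have hsq : IsSquare (-1 : ZMod p) := by
    refine ⟨PadicInt.toZMod a / PadicInt.toZMod b, ?_⟩
    have h0 : (PadicInt.toZMod a) ^ 2 + (PadicInt.toZMod b) ^ 2 = 0 := by simpa using hmem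
    field_simp
    linear_combination -h0
  rw [ZMod.exists_sq_eq_neg_one_iff] at hsq
  exact hsq hp4

lemma aux_norm_sum (p : ℕ) [Fact p.Prime] (hp4 : p % 4 = 3) (k l : ℕ) (hkl : k ≤ l)
    (a b : ℤ_[p]) (ha : IsUnit a) (hb : IsUnit b) :
    ‖(a * (p : ℤ_[p]) ^ k) ^ 2 + (b * (p : ℤ_[p]) ^ l) ^ 2‖ = (p : ℝ) ^ (-(2 * k : ℤ)) := by
  have hna : ‖a‖ = 1 := PadicInt.isUnit_iff.mp ha
  have hnb : ‖b‖ = 1 := PadicInt.isUnit_iff.mp hb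
  have hp1 : (1 : ℝ) < p := by exact_mod_cast (Fact.out : p.Prime).one_lt
  rcases eq_or_lt_of_le hkl with h | h
  · subst h
    have : (a * (p : ℤ_[p]) ^ k) ^ 2 + (b * (p : ℤ_[p]) ^ k) ^ 2
        = (a ^ 2 + b ^ 2) * ((p : ℤ_[p]) ^ k) ^ 2 := by ring
    rw [this, norm_mul, PadicInt.isUnit_iff.mp (aux_sum_sq_unit p hp4 a b hb), one_mul,
      ← pow_mul, PadicInt.norm_p_pow]
    norm_num [mul_comm]
  · have e1 : ‖(a * (p : ℤ_[p]) ^ k) ^ 2‖ = (p : ℝ) ^ (-(2 * k : ℤ)) := by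
      rw [norm_pow, norm_mul, hna, one_mul, PadicInt.norm_p_pow, ← zpow_natCast,
        ← zpow_mul]
      ring_nf
    have e2 : ‖(b * (p : ℤ_[p]) ^ l) ^ 2‖ = (p : ℝ) ^ (-(2 * l : ℤ)) := by
      rw [norm_pow, norm_mul, hnb, one_mul, PadicInt.norm_p_pow, ← zpow_natCast,
        ← zpow_mul]
      ring_nf
    have hne : ‖(a * (p : ℤ_[p]) ^ k) ^ 2‖ ≠ ‖(b * (p : ℤ_[p]) ^ l) ^ 2‖ := by
      rw [e1, e2]
      intro hcon
      have := zpow_right_injective₀ (by linarith : (0:ℝ) < p) (by linarith) hcon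
      omega
    rw [PadicInt.norm_add_eq_max_of_ne hne, e1, e2, max_eq_left]
    rw [zpow_le_zpow_iff_right₀ hp1]
    omega

/-- Let `p ≡ 3 (mod 4)` be prime, `r > 0`, and `v₃₅ = a·p^k`, `v₄₅ = b·p^l` with
`a, b ∈ ℤ_p^×`, `0 ≤ k, l < r`.  Suppose `p^r ∣ v₃₅·v₄₅` (with quotient `d`),
`2p^r` divides `v₃₅² + v₄₅²` (quotient `c`) and `v₃₅² − v₄₅²` (quotient `e`),
and the coprimality conditions
`gcd(p^r, v₃₅, v₄₅, (v₃₅²+v₄₅²)/(2p^r)) = 1` and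
`gcd(p^r, v₃₅, v₄₅, v₃₅v₄₅/p^r, (v₃₅²−v₄₅²)/(2p^r)) = 1` hold
(phrased as the corresponding ideals of `ℤ_p` being the unit ideal).
Then `r = 2·min(k, l)`. -/
theorem so42_alpha_coprimality_odd_p (p : ℕ) [Fact p.Prime] (hp4 : p % 4 = 3)
    (r k l : ℕ) (hr : 0 < r) (hk : k < r) (hl : l < r)
    (a b c d e : ℤ_[p]) (ha : IsUnit a) (hb : IsUnit b)
    (hc : (a * (p : ℤ_[p]) ^ k) ^ 2 + (b * (p : ℤ_[p]) ^ l) ^ 2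
        = 2 * (p : ℤ_[p]) ^ r * c)
    (hd : (a * (p : ℤ_[p]) ^ k) * (b * (p : ℤ_[p]) ^ l) = (p : ℤ_[p]) ^ r * d)
    (he : (a * (p : ℤ_[p]) ^ k) ^ 2 - (b * (p : ℤ_[p]) ^ l) ^ 2
        = 2 * (p : ℤ_[p]) ^ r * e)
    (h1 : Ideal.span ({(p : ℤ_[p]) ^ r, a * (p : ℤ_[p]) ^ k,
        b * (p : ℤ_[p]) ^ l, c} : Set ℤ_[p]) = ⊤)
    (h2 : Ideal.span ({(p : ℤ_[p]) ^ r, a * (p : ℤ_[p]) ^ k,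
        b * (p : ℤ_[p]) ^ l, d, e} : Set ℤ_[p]) = ⊤) :
    r = 2 * min k l := by
  have hp1 : (1 : ℝ) < p := by exact_mod_cast (Fact.out : p.Prime).one_lt
  have hp2 : 2 ≤ p := (Fact.out : p.Prime).two_le
  -- norm of LHS of hc
  have hsum : ‖(a * (p : ℤ_[p]) ^ k) ^ 2 + (b * (p : ℤ_[p]) ^ l) ^ 2‖
      = (p : ℝ) ^ (-(2 * min k l : ℤ)) := by
    rcases le_total k l with h | h
    · rw [min_eq_left h]; exact aux_norm_sum p hp4 k l h a b ha hb
    · rw [min_eq_right h, add_comm]; exact aux_norm_sum p hp4 l k h b a hb ha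
  -- norm of 2
  have h2norm : ‖(2 : ℤ_[p])‖ = 1 := by
    rcases lt_or_eq_of_le (PadicInt.norm_le_one (2 : ℤ_[p])) with h | h
    · exfalso
      have h2' : ‖((2 : ℤ) : ℤ_[p])‖ < 1 := by exact_mod_cast h
      rw [PadicInt.norm_int_lt_one_iff_dvd] at h2'
      have hle2 : (p : ℤ) ≤ 2 := Int.le_of_dvd (by norm_num) h2'
      have : p ≤ 2 := by exact_mod_cast hle2
      omega
    · exact h
  -- combined equation
  have hkey : (p : ℝ) ^ (-(2 * min k l : ℤ)) = (p : ℝ) ^ (-(r : ℤ)) * ‖c‖ := by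
    rw [← hsum, hc, norm_mul, norm_mul, h2norm, one_mul, PadicInt.norm_p_pow]
  -- r ≤ 2 * min k l
  have hle : (r : ℤ) ≤ 2 * min k l := by
    have h1' : (p : ℝ) ^ (-(2 * min k l : ℤ)) ≤ (p : ℝ) ^ (-(r : ℤ)) := by
      rw [hkey]
      calc (p : ℝ) ^ (-(r : ℤ)) * ‖c‖ ≤ (p : ℝ) ^ (-(r : ℤ)) * 1 := by
            apply mul_le_mul_of_nonneg_left (PadicInt.norm_le_one c)
            positivity
        _ = (p : ℝ) ^ (-(r : ℤ)) := mul_one _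
    rw [zpow_le_zpow_iff_right₀ hp1] at h1'
    omega
  have hm : 0 < min k l := by omega
  -- from h1, one generator is a unit
  have hcase : IsUnit ((p : ℤ_[p]) ^ r) ∨ IsUnit (a * (p : ℤ_[p]) ^ k)
      ∨ IsUnit (b * (p : ℤ_[p]) ^ l) ∨ IsUnit c := by
    by_contra hcon
    push_neg at hcon
    obtain ⟨u1, u2, u3, u4⟩ := hcon
    have hspan : Ideal.span ({(p : ℤ_[p]) ^ r, a * (p : ℤ_[p]) ^ k,
        b * (p : ℤ_[p]) ^ l, c} : Set ℤ_[p]) ≤ IsLocalRing.maximalIdeal ℤ_[p] := by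
      rw [Ideal.span_le]
      intro x hx
      simp only [Set.mem_insert_iff, Set.mem_singleton_iff] at hx
      rcases hx with h | h | h | h <;> subst h <;>
        rw [SetLike.mem_coe, IsLocalRing.mem_maximalIdeal] <;> assumption
    rw [h1] at hspan
    exact (IsLocalRing.maximalIdeal.isMaximal ℤ_[p]).ne_top (top_le_iff.mp hspan)
  -- rule out the non-c cases using norms
  have hnormlt : ∀ n : ℕ, 0 < n → ¬ IsUnit ((p : ℤ_[p]) ^ n) := by
    intro n hn hu
    rw [PadicInt.isUnit_iff, PadicInt.norm_p_pow] at hu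
    have : (p : ℝ) ^ (-(n : ℤ)) < 1 := zpow_lt_one_of_neg₀ hp1 (by omega)
    rw [hu] at this
    exact lt_irrefl _ this
  have hcunit : IsUnit c := by
    rcases hcase with h | h | h | h
    · exact absurd h (hnormlt r hr)
    · exact absurd (isUnit_of_mul_isUnit_right h) (hnormlt k (by omega))
    · exact absurd (isUnit_of_mul_isUnit_right h) (hnormlt l (by omega))
    · exact h
  have hcnorm : ‖c‖ = 1 := PadicInt.isUnit_iff.mp hcunit
  rw [hcnorm, mul_one] at hkey
  have := zpow_right_injective₀ (by linarith : (0:ℝ) < p) (by linarith) hkey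
  omega
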